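/- (Interpretation of Algorithm A.) In the rejection scheme in which θ ~ π, X | θ ~ f(·|θ), and θ is accepted if and only if ‖X − D‖ ≤ δ (Algorithm A with Euclidean metric), and assuming P(‖X − D‖ ≤ δ) > 0, the conditional distribution of θ given acceptance equals the conditional distribution of θ̂ given D' = D in the additive-error model θ̂ ~ π, X | θ̂ ~ f(·|θ̂), D' := X + ε, where ε is independent and uniformly distributed on the closed Euclidean ball of radius δ centred at 0 in ℝ^d. -/

import Mathlib

open MeasureTheory ProbabilityTheory
open scoped ENNReal
set_option maxHeartbeats 1000000

section Aux
open Set Metric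

namespace AlgAAux

variable {p d : ℕ}

local notation "E" => EuclideanSpace ℝ (Fin d)
local notation "Θ" => (Fin p → ℝ)

/-- integral over closed ball of radius δ around `dd`, as a lintegral kernel. -/
@[irreducible] noncomputable def G (f : (Fin p → ℝ) → EuclideanSpace ℝ (Fin d) → ℝ) (δ : ℝ)
    (θ : Fin p → ℝ) (dd : EuclideanSpace ℝ (Fin d)) : ℝ≥0∞ :=
  ∫⁻ x, (Metric.closedBall (0 : EuclideanSpace ℝ (Fin d)) δ).indicator 1 (dd - x)
    * ENNReal.ofReal (f θ x)

lemma measurable_G_kernel {f : (Fin p → ℝ) → EuclideanSpace ℝ (Fin d) → ℝ} {δ : ℝ}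
    (hf_meas : Measurable (Function.uncurry f)) :
    Measurable (fun q : ((Fin p → ℝ) × EuclideanSpace ℝ (Fin d)) × EuclideanSpace ℝ (Fin d) =>
      (Metric.closedBall (0 : EuclideanSpace ℝ (Fin d)) δ).indicator 1 (q.1.2 - q.2)
        * ENNReal.ofReal (f q.1.1 q.2)) := by
  apply Measurable.mul
  · exact (measurable_const.indicator measurableSet_closedBall).comp
      (measurable_fst.snd.sub measurable_snd)
  · exact ENNReal.measurable_ofReal.comp (hf_meas.comp (measurable_fst.fst.prodMk measurable_snd))

lemma measurable_G {f : (Fin p → ℝ) → EuclideanSpace ℝ (Fin d) → ℝ} {δ : ℝ}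
    (hf_meas : Measurable (Function.uncurry f)) :
    Measurable (fun q : (Fin p → ℝ) × EuclideanSpace ℝ (Fin d) => G f δ q.1 q.2) :=
by
  unfold G
  exact (measurable_G_kernel hf_meas).lintegral_prod_right'

lemma G_eq_setLIntegral (f : (Fin p → ℝ) → EuclideanSpace ℝ (Fin d) → ℝ) (δ : ℝ)
    (θ : Fin p → ℝ) (dd : EuclideanSpace ℝ (Fin d)) :
    G f δ θ dd = ∫⁻ x in Metric.closedBall dd δ, ENNReal.ofReal (f θ x) := by
  unfold G
  rw [← lintegral_indicator measurableSet_closedBall]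
  refine lintegral_congr fun x => ?_
  by_cases h : x ∈ Metric.closedBall dd δ
  · have h' : dd - x ∈ Metric.closedBall (0 : EuclideanSpace ℝ (Fin d)) δ := by
      simpa [Metric.mem_closedBall, dist_eq_norm, norm_sub_rev] using h
    simp [h, h', Set.indicator_of_mem]
  · have h' : dd - x ∉ Metric.closedBall (0 : EuclideanSpace ℝ (Fin d)) δ := by
      intro hc; apply h
      simpa [Metric.mem_closedBall, dist_eq_norm, norm_sub_rev] using hc
    simp [h, h', Set.indicator_of_notMem]


lemma integrable_of_integral_one {α : Type*} [MeasurableSpace α] {μ : Measure α} {g : α → ℝ}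
    (h : ∫ x, g x ∂μ = 1) : Integrable g μ := by
  by_contra hc; rw [integral_undef hc] at h; norm_num at h

lemma lintegral_ofReal_eq_one {α : Type*} [MeasurableSpace α] {μ : Measure α} {g : α → ℝ}
    (h0 : ∀ x, 0 ≤ g x) (h : ∫ x, g x ∂μ = 1) :
    ∫⁻ x, ENNReal.ofReal (g x) ∂μ = 1 := by
  rw [← ofReal_integral_eq_lintegral_ofReal (integrable_of_integral_one h)
    (Filter.Eventually.of_forall h0), h, ENNReal.ofReal_one]

lemma G_le_one {f : (Fin p → ℝ) → EuclideanSpace ℝ (Fin d) → ℝ} {δ : ℝ}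
    (hf_nonneg : ∀ θ x, 0 ≤ f θ x) (hf_int : ∀ θ, ∫ x, f θ x = 1)
    (θ : Fin p → ℝ) (dd : EuclideanSpace ℝ (Fin d)) : G f δ θ dd ≤ 1 := by
  calc G f δ θ dd ≤ ∫⁻ x, ENNReal.ofReal (f θ x) := by
        unfold G
        refine lintegral_mono fun x => ?_
        by_cases h : dd - x ∈ Metric.closedBall (0 : EuclideanSpace ℝ (Fin d)) δ
        · simp [Set.indicator_of_mem, h]
        · simp [Set.indicator_of_notMem, h]
    _ = 1 := lintegral_ofReal_eq_one (hf_nonneg θ) (hf_int θ)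

lemma lintegral_ind_shift {δ : ℝ} (x : EuclideanSpace ℝ (Fin d)) :
    ∫⁻ dd, (Metric.closedBall (0 : EuclideanSpace ℝ (Fin d)) δ).indicator 1 (dd - x)
      = volume (Metric.closedBall (0 : EuclideanSpace ℝ (Fin d)) δ) := by
  have h := lintegral_add_right_eq_self (μ := volume)
    (fun dd => (Metric.closedBall (0 : EuclideanSpace ℝ (Fin d)) δ).indicator 1 dd) (-x)
  simp only [← sub_eq_add_neg] at h
  rw [h, lintegral_indicator measurableSet_closedBall]
  simp

lemma lintegral_G {f : (Fin p → ℝ) → EuclideanSpace ℝ (Fin d) → ℝ} {δ : ℝ}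
    (hf_meas : Measurable (Function.uncurry f)) (hf_nonneg : ∀ θ x, 0 ≤ f θ x)
    (hf_int : ∀ θ, ∫ x, f θ x = 1) (θ : Fin p → ℝ) :
    ∫⁻ dd, G f δ θ dd = volume (Metric.closedBall (0 : EuclideanSpace ℝ (Fin d)) δ) := by
  have hfθ : Measurable (f θ) := hf_meas.comp measurable_prodMk_left
  unfold G
  rw [lintegral_lintegral_swap]
  · have : ∀ x, (∫⁻ dd, (Metric.closedBall (0 : EuclideanSpace ℝ (Fin d)) δ).indicator 1 (dd - x)
        * ENNReal.ofReal (f θ x))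
        = volume (Metric.closedBall (0 : EuclideanSpace ℝ (Fin d)) δ) * ENNReal.ofReal (f θ x) := by
      intro x
      rw [lintegral_mul_const' _ _ ENNReal.ofReal_ne_top, lintegral_ind_shift x, mul_comm]
    simp_rw [this]
    rw [lintegral_const_mul _ hfθ.ennreal_ofReal,
      lintegral_ofReal_eq_one (hf_nonneg θ) (hf_int θ), mul_one]
  · apply Measurable.aemeasurable
    apply Measurable.mul
    · exact (measurable_const.indicator measurableSet_closedBall).comp
        (measurable_fst.sub measurable_snd)
    · exact (hfθ.comp measurable_snd).ennreal_ofReal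


/-- The uniform density on the closed ball. -/
noncomputable def pu (d : ℕ) (δ : ℝ) : EuclideanSpace ℝ (Fin d) → ℝ := fun e =>
  Set.indicator (Metric.closedBall (0 : EuclideanSpace ℝ (Fin d)) δ)
    (fun _ => ((volume (Metric.closedBall (0 : EuclideanSpace ℝ (Fin d)) δ)).toReal)⁻¹) e

lemma pu_nonneg (d : ℕ) (δ : ℝ) (e : EuclideanSpace ℝ (Fin d)) : 0 ≤ pu d δ e := by
  unfold pu
  exact Set.indicator_nonneg (fun _ _ => by positivity) e

lemma pu_le (d : ℕ) (δ : ℝ) (e : EuclideanSpace ℝ (Fin d)) :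
    pu d δ e ≤ ((volume (Metric.closedBall (0 : EuclideanSpace ℝ (Fin d)) δ)).toReal)⁻¹ := by
  unfold pu
  exact Set.indicator_le' (fun _ _ => le_rfl) (fun _ _ => by positivity) e

lemma measurable_pu (d : ℕ) (δ : ℝ) : Measurable (pu d δ) :=
  measurable_const.indicator measurableSet_closedBall

lemma vol_ne_zero {δ : ℝ} (hδ : 0 < δ) :
    volume (Metric.closedBall (0 : EuclideanSpace ℝ (Fin d)) δ) ≠ 0 :=
  (Metric.measure_closedBall_pos volume 0 hδ).ne'

lemma vol_ne_top (δ : ℝ) :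
    volume (Metric.closedBall (0 : EuclideanSpace ℝ (Fin d)) δ) ≠ ⊤ :=
  measure_closedBall_lt_top.ne

lemma ofReal_pu {δ : ℝ} (hδ : 0 < δ) (e : EuclideanSpace ℝ (Fin d)) :
    ENNReal.ofReal (pu d δ e)
      = (volume (Metric.closedBall (0 : EuclideanSpace ℝ (Fin d)) δ))⁻¹
        * (Metric.closedBall (0 : EuclideanSpace ℝ (Fin d)) δ).indicator 1 e := by
  unfold pu
  by_cases h : e ∈ Metric.closedBall (0 : EuclideanSpace ℝ (Fin d)) δ
  · rw [Set.indicator_of_mem h, Set.indicator_of_mem h, ← ENNReal.toReal_inv,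
      ENNReal.ofReal_toReal (by simp [vol_ne_zero hδ])]
    simp
  · simp [Set.indicator_of_notMem h]

lemma ofReal_integral_pug {f : (Fin p → ℝ) → EuclideanSpace ℝ (Fin d) → ℝ} {δ : ℝ}
    (hδ : 0 < δ) (hf_meas : Measurable (Function.uncurry f)) (hf_nonneg : ∀ θ x, 0 ≤ f θ x)
    (hf_int : ∀ θ, ∫ x, f θ x = 1) (θ : Fin p → ℝ) (dd : EuclideanSpace ℝ (Fin d)) :
    ENNReal.ofReal (∫ x, pu d δ (dd - x) * f θ x)
      = (volume (Metric.closedBall (0 : EuclideanSpace ℝ (Fin d)) δ))⁻¹ * G f δ θ dd := by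
  have hfθ : Measurable (f θ) := hf_meas.comp measurable_prodMk_left
  have hint : Integrable (fun x => pu d δ (dd - x) * f θ x) := by
    refine Integrable.mono'
      (((integrable_of_integral_one (hf_int θ)).const_mul
        ((volume (Metric.closedBall (0 : EuclideanSpace ℝ (Fin d)) δ)).toReal)⁻¹)) ?_ ?_
    · exact (((measurable_pu d δ).comp (measurable_const.sub measurable_id)).mul
        hfθ).aestronglyMeasurable
    · refine Filter.Eventually.of_forall fun x => ?_
      rw [Real.norm_eq_abs, abs_of_nonneg (mul_nonneg (pu_nonneg _ _ _) (hf_nonneg θ x))]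
      exact mul_le_mul_of_nonneg_right (pu_le d δ _) (hf_nonneg θ x)
  rw [ofReal_integral_eq_lintegral_ofReal hint (Filter.Eventually.of_forall fun x =>
    mul_nonneg (pu_nonneg _ _ _) (hf_nonneg θ x))]
  unfold G
  calc ∫⁻ x, ENNReal.ofReal (pu d δ (dd - x) * f θ x)
      = ∫⁻ x, (volume (Metric.closedBall (0 : EuclideanSpace ℝ (Fin d)) δ))⁻¹
          * ((Metric.closedBall (0 : EuclideanSpace ℝ (Fin d)) δ).indicator 1 (dd - x)
            * ENNReal.ofReal (f θ x)) := by
        refine lintegral_congr fun x => ?_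
        rw [ENNReal.ofReal_mul (pu_nonneg _ _ _), ofReal_pu hδ, mul_assoc]
    _ = _ := by
        rw [lintegral_const_mul]
        exact ((measurable_const.indicator measurableSet_closedBall).comp
          (measurable_const.sub measurable_id)).mul hfθ.ennreal_ofReal

lemma integral_pug_eq_toReal {f : (Fin p → ℝ) → EuclideanSpace ℝ (Fin d) → ℝ} {δ : ℝ}
    (hδ : 0 < δ) (hf_meas : Measurable (Function.uncurry f)) (hf_nonneg : ∀ θ x, 0 ≤ f θ x)
    (hf_int : ∀ θ, ∫ x, f θ x = 1) (θ : Fin p → ℝ) (dd : EuclideanSpace ℝ (Fin d)) :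
    (∫ x, pu d δ (dd - x) * f θ x)
      = (((volume (Metric.closedBall (0 : EuclideanSpace ℝ (Fin d)) δ))⁻¹ * G f δ θ dd).toReal) := by
  rw [← ofReal_integral_pug hδ hf_meas hf_nonneg hf_int θ dd,
    ENNReal.toReal_ofReal (integral_nonneg fun x =>
      mul_nonneg (pu_nonneg _ _ _) (hf_nonneg θ x))]

/-- Pointwise version of the posterior-normalising integrand, in ℝ≥0∞. -/
noncomputable def Phi {p d : ℕ} (π : (Fin p → ℝ) → ℝ)
    (f : (Fin p → ℝ) → EuclideanSpace ℝ (Fin d) → ℝ) (δ : ℝ) (B : Set (Fin p → ℝ))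
    (dd : EuclideanSpace ℝ (Fin d)) : ℝ≥0∞ :=
  ∫⁻ θ in B, ENNReal.ofReal (π θ)
    * ((volume (Metric.closedBall (0 : EuclideanSpace ℝ (Fin d)) δ))⁻¹ * G f δ θ dd)

lemma measurable_Phi {π : (Fin p → ℝ) → ℝ} {f : (Fin p → ℝ) → EuclideanSpace ℝ (Fin d) → ℝ}
    {δ : ℝ} (hπ_meas : Measurable π) (hf_meas : Measurable (Function.uncurry f))
    (B : Set (Fin p → ℝ)) : Measurable (Phi π f δ B) := by
  unfold Phi
  have hk : Measurable (fun q : EuclideanSpace ℝ (Fin d) × (Fin p → ℝ) => ENNReal.ofReal (π q.2)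
      * ((volume (Metric.closedBall (0 : EuclideanSpace ℝ (Fin d)) δ))⁻¹ * G f δ q.2 q.1)) := by
    apply Measurable.mul
    · exact (hπ_meas.comp measurable_snd).ennreal_ofReal
    · apply Measurable.mul measurable_const
      exact (measurable_G hf_meas).comp (measurable_snd.prodMk measurable_fst)
  exact hk.lintegral_prod_right' (ν := volume.restrict B)

lemma Phi_le {π : (Fin p → ℝ) → ℝ} {f : (Fin p → ℝ) → EuclideanSpace ℝ (Fin d) → ℝ}
    {δ : ℝ} (hδ : 0 < δ) (hπ_nonneg : ∀ θ, 0 ≤ π θ) (hπ_int : ∫ θ, π θ = 1)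
    (hf_nonneg : ∀ θ x, 0 ≤ f θ x) (hf_int : ∀ θ, ∫ x, f θ x = 1)
    (B : Set (Fin p → ℝ)) (dd : EuclideanSpace ℝ (Fin d)) :
    Phi π f δ B dd ≤ (volume (Metric.closedBall (0 : EuclideanSpace ℝ (Fin d)) δ))⁻¹ := by
  unfold Phi
  have h1 : ∫⁻ θ, ENNReal.ofReal (π θ)
        * (volume (Metric.closedBall (0 : EuclideanSpace ℝ (Fin d)) δ))⁻¹
      = (volume (Metric.closedBall (0 : EuclideanSpace ℝ (Fin d)) δ))⁻¹ := by
    rw [lintegral_mul_const' _ _ (ENNReal.inv_ne_top.2 (vol_ne_zero hδ)),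
      lintegral_ofReal_eq_one hπ_nonneg hπ_int, one_mul]
  refine le_trans ?_ h1.le
  refine le_trans (lintegral_mono' Measure.restrict_le_self le_rfl) (lintegral_mono fun θ => ?_)
  have h2 : (volume (Metric.closedBall (0 : EuclideanSpace ℝ (Fin d)) δ))⁻¹ * G f δ θ dd
      ≤ (volume (Metric.closedBall (0 : EuclideanSpace ℝ (Fin d)) δ))⁻¹ := by
    simpa using mul_le_mul_right (G_le_one hf_nonneg hf_int θ dd)
      ((volume (Metric.closedBall (0 : EuclideanSpace ℝ (Fin d)) δ))⁻¹)
  exact mul_le_mul_right h2 _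

lemma Phi_ne_top {π : (Fin p → ℝ) → ℝ} {f : (Fin p → ℝ) → EuclideanSpace ℝ (Fin d) → ℝ}
    {δ : ℝ} (hδ : 0 < δ) (hπ_nonneg : ∀ θ, 0 ≤ π θ) (hπ_int : ∫ θ, π θ = 1)
    (hf_nonneg : ∀ θ x, 0 ≤ f θ x) (hf_int : ∀ θ, ∫ x, f θ x = 1)
    (B : Set (Fin p → ℝ)) (dd : EuclideanSpace ℝ (Fin d)) : Phi π f δ B dd ≠ ⊤ :=
  fun h => ENNReal.inv_ne_top.2 (vol_ne_zero hδ)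
    (top_le_iff.1 (h ▸ Phi_le hδ hπ_nonneg hπ_int hf_nonneg hf_int B dd))


lemma measurable_G_swap {f : (Fin p → ℝ) → EuclideanSpace ℝ (Fin d) → ℝ} {δ : ℝ}
    (hf_meas : Measurable (Function.uncurry f)) :
    Measurable (fun q : EuclideanSpace ℝ (Fin d) × (Fin p → ℝ) => G f δ q.2 q.1) :=
  (measurable_G hf_meas).comp (measurable_snd.prodMk measurable_fst)

lemma measurable_G_left {f : (Fin p → ℝ) → EuclideanSpace ℝ (Fin d) → ℝ} {δ : ℝ}
    (hf_meas : Measurable (Function.uncurry f)) (dd : EuclideanSpace ℝ (Fin d)) :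
    Measurable (fun θ => G f δ θ dd) :=
  (measurable_G hf_meas).comp (measurable_id.prodMk measurable_const)

lemma measurable_G_right {f : (Fin p → ℝ) → EuclideanSpace ℝ (Fin d) → ℝ} {δ : ℝ}
    (hf_meas : Measurable (Function.uncurry f)) (θ : Fin p → ℝ) :
    Measurable (fun dd => G f δ θ dd) :=
  (measurable_G hf_meas).comp (measurable_const.prodMk measurable_id)

lemma setIntegral_eq_toReal_Phi {π : (Fin p → ℝ) → ℝ}
    {f : (Fin p → ℝ) → EuclideanSpace ℝ (Fin d) → ℝ} {δ : ℝ} (hδ : 0 < δ)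
    (hπ_meas : Measurable π) (hπ_nonneg : ∀ θ, 0 ≤ π θ)
    (hf_meas : Measurable (Function.uncurry f)) (hf_nonneg : ∀ θ x, 0 ≤ f θ x)
    (hf_int : ∀ θ, ∫ x, f θ x = 1) (B : Set (Fin p → ℝ)) (dd : EuclideanSpace ℝ (Fin d)) :
    ∫ θ in B, π θ * ∫ x, pu d δ (dd - x) * f θ x = (Phi π f δ B dd).toReal := by
  have hptw : ∀ θ, π θ * ∫ x, pu d δ (dd - x) * f θ x
      = ((ENNReal.ofReal (π θ)
        * ((volume (Metric.closedBall (0 : EuclideanSpace ℝ (Fin d)) δ))⁻¹ * G f δ θ dd))).toReal := by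
    intro θ
    rw [ENNReal.toReal_mul, ENNReal.toReal_ofReal (hπ_nonneg θ),
      integral_pug_eq_toReal hδ hf_meas hf_nonneg hf_int θ dd]
  unfold Phi
  simp_rw [hptw]
  apply integral_toReal
  · exact ((hπ_meas.ennreal_ofReal).mul
      (measurable_const.mul (measurable_G_left hf_meas dd))).aemeasurable
  · refine Filter.Eventually.of_forall fun θ => ?_
    exact ENNReal.mul_lt_top ENNReal.ofReal_lt_top
      (ENNReal.mul_lt_top (ENNReal.inv_lt_top.2 (Metric.measure_closedBall_pos volume 0 hδ))
        (lt_of_le_of_lt (G_le_one hf_nonneg hf_int θ dd) ENNReal.one_lt_top))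


lemma Phi_univ_zero {π : (Fin p → ℝ) → ℝ}
    {f : (Fin p → ℝ) → EuclideanSpace ℝ (Fin d) → ℝ} {δ : ℝ}
    (B : Set (Fin p → ℝ)) (dd : EuclideanSpace ℝ (Fin d))
    (h : Phi π f δ Set.univ dd = 0) : Phi π f δ B dd = 0 := by
  refine le_antisymm (le_trans ?_ h.le) zero_le
  unfold Phi
  rw [Measure.restrict_univ]
  exact lintegral_mono' Measure.restrict_le_self le_rfl

lemma key_integrand {π : (Fin p → ℝ) → ℝ}
    {f : (Fin p → ℝ) → EuclideanSpace ℝ (Fin d) → ℝ} {δ : ℝ} (hδ : 0 < δ)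
    (hπ_meas : Measurable π) (hπ_nonneg : ∀ θ, 0 ≤ π θ) (hπ_int : ∫ θ, π θ = 1)
    (hf_meas : Measurable (Function.uncurry f)) (hf_nonneg : ∀ θ x, 0 ≤ f θ x)
    (hf_int : ∀ θ, ∫ x, f θ x = 1) (B : Set (Fin p → ℝ)) (dd : EuclideanSpace ℝ (Fin d)) :
    (∫ θ', π θ' * ∫ x, pu d δ (dd - x) * f θ' x) *
      ∫ θ in B, π θ * (∫ x, pu d δ (dd - x) * f θ x) /
        (∫ θ', π θ' * ∫ x, pu d δ (dd - x) * f θ' x)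
    = (Phi π f δ B dd).toReal := by
  have hZeq : (∫ θ', π θ' * ∫ x, pu d δ (dd - x) * f θ' x)
      = (Phi π f δ Set.univ dd).toReal := by
    rw [← setIntegral_univ]
    exact setIntegral_eq_toReal_Phi hδ hπ_meas hπ_nonneg hf_meas hf_nonneg hf_int Set.univ dd
  have hZ0 : 0 ≤ ∫ θ', π θ' * ∫ x, pu d δ (dd - x) * f θ' x :=
    integral_nonneg fun θ => mul_nonneg (hπ_nonneg θ)
      (integral_nonneg fun x => mul_nonneg (pu_nonneg _ _ _) (hf_nonneg θ x))
  rcases hZ0.eq_or_lt with h0 | hpos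
  · have hPhiuniv : Phi π f δ Set.univ dd = 0 := by
      rcases (ENNReal.toReal_eq_zero_iff _).1 (hZeq ▸ h0.symm) with h | h
      · exact h
      · exact absurd h (Phi_ne_top hδ hπ_nonneg hπ_int hf_nonneg hf_int Set.univ dd)
    rw [← h0, zero_mul, Phi_univ_zero B dd hPhiuniv]
    simp
  · rw [integral_div, setIntegral_eq_toReal_Phi hδ hπ_meas hπ_nonneg hf_meas hf_nonneg hf_int B dd,
      mul_comm, div_mul_cancel₀ _ hpos.ne']

lemma lintegral_Phi_le_one {π : (Fin p → ℝ) → ℝ}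
    {f : (Fin p → ℝ) → EuclideanSpace ℝ (Fin d) → ℝ} {δ : ℝ} (hδ : 0 < δ)
    (hπ_meas : Measurable π) (hπ_nonneg : ∀ θ, 0 ≤ π θ) (hπ_int : ∫ θ, π θ = 1)
    (hf_meas : Measurable (Function.uncurry f)) (hf_nonneg : ∀ θ x, 0 ≤ f θ x)
    (hf_int : ∀ θ, ∫ x, f θ x = 1) (B : Set (Fin p → ℝ)) :
    ∫⁻ dd, Phi π f δ B dd ≤ 1 := by
  unfold Phi
  rw [lintegral_lintegral_swap]
  · have hin : ∀ θ, ∫⁻ dd, ENNReal.ofReal (π θ)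
        * ((volume (Metric.closedBall (0 : EuclideanSpace ℝ (Fin d)) δ))⁻¹ * G f δ θ dd)
        = ENNReal.ofReal (π θ) := by
      intro θ
      rw [lintegral_const_mul _ ((measurable_G_right hf_meas θ).const_mul _),
        lintegral_const_mul _ (measurable_G_right hf_meas θ),
        lintegral_G hf_meas hf_nonneg hf_int θ,
        ENNReal.inv_mul_cancel (vol_ne_zero hδ) (vol_ne_top δ), mul_one]
    simp_rw [hin]
    refine le_trans (lintegral_mono' Measure.restrict_le_self le_rfl) ?_
    rw [lintegral_ofReal_eq_one hπ_nonneg hπ_int]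
  · apply Measurable.aemeasurable
    apply Measurable.mul
    · exact (hπ_meas.comp measurable_snd).ennreal_ofReal
    · exact measurable_const.mul (measurable_G_swap hf_meas)


lemma pair_measure_rect {π : (Fin p → ℝ) → ℝ}
    {f : (Fin p → ℝ) → EuclideanSpace ℝ (Fin d) → ℝ}
    (hπ_meas : Measurable π) (hπ_nonneg : ∀ θ, 0 ≤ π θ)
    (hf_meas : Measurable (Function.uncurry f))
    {A : Set (Fin p → ℝ)} (hA : MeasurableSet A)
    {S : Set (EuclideanSpace ℝ (Fin d))} (hS : MeasurableSet S) :
    ((volume : Measure ((Fin p → ℝ) × EuclideanSpace ℝ (Fin d))).withDensity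
      (fun q => ENNReal.ofReal (π q.1 * f q.1 q.2))) (A ×ˢ S)
    = ∫⁻ θ in A, ENNReal.ofReal (π θ) * ∫⁻ x in S, ENNReal.ofReal (f θ x) := by
  rw [withDensity_apply _ (hA.prod hS), Measure.volume_eq_prod, ← Measure.prod_restrict,
    lintegral_prod]
  · refine lintegral_congr fun θ => ?_
    have hfθ : Measurable (f θ) := hf_meas.comp measurable_prodMk_left
    simp_rw [ENNReal.ofReal_mul (hπ_nonneg _)]
    rw [lintegral_const_mul _ hfθ.ennreal_ofReal]
  · exact ((hπ_meas.comp measurable_fst).mul hf_meas).ennreal_ofReal.aemeasurable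

lemma conj1 {π : (Fin p → ℝ) → ℝ} {f : (Fin p → ℝ) → EuclideanSpace ℝ (Fin d) → ℝ}
    {D : EuclideanSpace ℝ (Fin d)} {δ : ℝ} (hδ : 0 < δ)
    (hπ_meas : Measurable π) (hπ_nonneg : ∀ θ, 0 ≤ π θ) (hπ_int : ∫ θ, π θ = 1)
    (hf_meas : Measurable (Function.uncurry f)) (hf_nonneg : ∀ θ x, 0 ≤ f θ x)
    (hf_int : ∀ θ, ∫ x, f θ x = 1)
    (hacc_pos : 0 < ((volume : Measure ((Fin p → ℝ) × EuclideanSpace ℝ (Fin d))).withDensity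
        (fun q => ENNReal.ofReal (π q.1 * f q.1 q.2)))
        {q : (Fin p → ℝ) × EuclideanSpace ℝ (Fin d) | ‖q.2 - D‖ ≤ δ}) :
    Measure.map Prod.fst
      (ProbabilityTheory.cond
        ((volume : Measure ((Fin p → ℝ) × EuclideanSpace ℝ (Fin d))).withDensity
          (fun q => ENNReal.ofReal (π q.1 * f q.1 q.2)))
        {q : (Fin p → ℝ) × EuclideanSpace ℝ (Fin d) | ‖q.2 - D‖ ≤ δ})
    = (volume : Measure (Fin p → ℝ)).withDensity
        (fun θ => ENNReal.ofReal (π θ * (∫ x, pu d δ (D - x) * f θ x) /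
          (∫ θ', π θ' * ∫ x, pu d δ (D - x) * f θ' x))) := by
  set μ := ((volume : Measure ((Fin p → ℝ) × EuclideanSpace ℝ (Fin d))).withDensity
    (fun q => ENNReal.ofReal (π q.1 * f q.1 q.2))) with hμ
  have hS_eq : {q : (Fin p → ℝ) × EuclideanSpace ℝ (Fin d) | ‖q.2 - D‖ ≤ δ}
      = (Set.univ : Set (Fin p → ℝ)) ×ˢ Metric.closedBall D δ := by
    ext q
    simp [Metric.mem_closedBall, dist_eq_norm]
  have hS_meas : MeasurableSet {q : (Fin p → ℝ) × EuclideanSpace ℝ (Fin d) | ‖q.2 - D‖ ≤ δ} := by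
    rw [hS_eq]; exact MeasurableSet.univ.prod measurableSet_closedBall
  have hWA : ∀ A : Set (Fin p → ℝ), MeasurableSet A →
      μ (A ×ˢ Metric.closedBall D δ) = ∫⁻ θ in A, ENNReal.ofReal (π θ) * G f δ θ D := by
    intro A hA
    rw [hμ, pair_measure_rect hπ_meas hπ_nonneg hf_meas hA measurableSet_closedBall]
    exact lintegral_congr fun θ => by rw [← G_eq_setLIntegral]
  set L := ∫⁻ θ, ENNReal.ofReal (π θ) * G f δ θ D with hL
  have hμS : μ {q : (Fin p → ℝ) × EuclideanSpace ℝ (Fin d) | ‖q.2 - D‖ ≤ δ} = L := by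
    rw [hS_eq, hWA Set.univ MeasurableSet.univ, hL, Measure.restrict_univ]
  have hL_ne0 : L ≠ 0 := by
    rw [← hμS]; exact hacc_pos.ne'
  have hL_le1 : L ≤ 1 := by
    rw [hL, ← lintegral_ofReal_eq_one hπ_nonneg hπ_int]
    refine lintegral_mono fun θ => ?_
    simpa using mul_le_mul_right (G_le_one hf_nonneg hf_int θ D) (ENNReal.ofReal (π θ))
  have hL_ne_top : L ≠ ⊤ := fun h => by simp [h] at hL_le1
  set v := volume (Metric.closedBall (0 : EuclideanSpace ℝ (Fin d)) δ) with hv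
  have hv0 : v ≠ 0 := vol_ne_zero hδ
  have hvt : v ≠ ⊤ := vol_ne_top δ
  have hvinv0 : v⁻¹ ≠ 0 := ENNReal.inv_ne_zero.2 hvt
  have hvinvt : v⁻¹ ≠ ⊤ := ENNReal.inv_ne_top.2 hv0
  have hPhiuniv : Phi π f δ Set.univ D = v⁻¹ * L := by
    unfold Phi
    rw [Measure.restrict_univ, hL, ← lintegral_const_mul (f := fun θ => ENNReal.ofReal (π θ) * G f δ θ D) _
      ((hπ_meas.ennreal_ofReal).mul (measurable_G_left hf_meas D))]
    exact lintegral_congr fun θ => mul_left_comm _ _ _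
  have hZ : (∫ θ', π θ' * ∫ x, pu d δ (D - x) * f θ' x) = (v⁻¹ * L).toReal := by
    rw [← setIntegral_univ, setIntegral_eq_toReal_Phi hδ hπ_meas hπ_nonneg hf_meas hf_nonneg
      hf_int Set.univ D, hPhiuniv]
  have hZpos : 0 < (∫ θ', π θ' * ∫ x, pu d δ (D - x) * f θ' x) := by
    rw [hZ]
    exact ENNReal.toReal_pos (mul_ne_zero hvinv0 hL_ne0) (ENNReal.mul_ne_top hvinvt hL_ne_top)
  have hdens : ∀ θ, ENNReal.ofReal (π θ * (∫ x, pu d δ (D - x) * f θ x) /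
        (∫ θ', π θ' * ∫ x, pu d δ (D - x) * f θ' x))
      = (ENNReal.ofReal (π θ) * G f δ θ D) / L := by
    intro θ
    rw [ENNReal.ofReal_div_of_pos hZpos, ENNReal.ofReal_mul (hπ_nonneg θ),
      ofReal_integral_pug hδ hf_meas hf_nonneg hf_int θ D, hZ,
      ENNReal.ofReal_toReal (ENNReal.mul_ne_top hvinvt hL_ne_top), mul_left_comm,
      ENNReal.mul_div_mul_left _ _ hvinv0 hvinvt]
  refine Measure.ext fun A hA => ?_
  rw [Measure.map_apply measurable_fst hA, ProbabilityTheory.cond_apply hS_meas, hμS]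
  have hint : {q : (Fin p → ℝ) × EuclideanSpace ℝ (Fin d) | ‖q.2 - D‖ ≤ δ} ∩ Prod.fst ⁻¹' A
      = A ×ˢ Metric.closedBall D δ := by
    rw [hS_eq]; ext q
    simp [Set.mem_prod, and_comm]
  rw [hint, hWA A hA, withDensity_apply _ hA]
  calc L⁻¹ * ∫⁻ θ in A, ENNReal.ofReal (π θ) * G f δ θ D
      = (∫⁻ θ in A, ENNReal.ofReal (π θ) * G f δ θ D) * L⁻¹ := mul_comm _ _
    _ = ∫⁻ θ in A, (ENNReal.ofReal (π θ) * G f δ θ D) * L⁻¹ := by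
        rw [lintegral_mul_const' _ _ (ENNReal.inv_ne_top.2 hL_ne0)]
    _ = ∫⁻ θ in A, ENNReal.ofReal (π θ * (∫ x, pu d δ (D - x) * f θ x) /
          (∫ θ', π θ' * ∫ x, pu d δ (D - x) * f θ' x)) := by
        refine lintegral_congr fun θ => ?_
        rw [hdens θ, ENNReal.div_eq_inv_mul, mul_comm]


lemma inner_W {f : (Fin p → ℝ) → EuclideanSpace ℝ (Fin d) → ℝ} {δ : ℝ} (hδ : 0 < δ)
    (hf_meas : Measurable (Function.uncurry f)) (θ : Fin p → ℝ)
    {C : Set (EuclideanSpace ℝ (Fin d))} (hC : MeasurableSet C) :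
    ∫⁻ q in {q : EuclideanSpace ℝ (Fin d) × EuclideanSpace ℝ (Fin d) | q.1 + q.2 ∈ C},
        ENNReal.ofReal (f θ q.1) * ENNReal.ofReal (pu d δ q.2)
      = (volume (Metric.closedBall (0 : EuclideanSpace ℝ (Fin d)) δ))⁻¹
        * ∫⁻ dd in C, G f δ θ dd := by
  have hfθ : Measurable (f θ) := hf_meas.comp measurable_prodMk_left
  have hW : MeasurableSet {q : EuclideanSpace ℝ (Fin d) × EuclideanSpace ℝ (Fin d) | q.1 + q.2 ∈ C} :=
    (measurable_fst.add measurable_snd) hC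
  set v := volume (Metric.closedBall (0 : EuclideanSpace ℝ (Fin d)) δ) with hv
  rw [← lintegral_indicator hW]
  have hind : ∀ q : EuclideanSpace ℝ (Fin d) × EuclideanSpace ℝ (Fin d),
      ({q : EuclideanSpace ℝ (Fin d) × EuclideanSpace ℝ (Fin d) | q.1 + q.2 ∈ C}).indicator
        (fun q => ENNReal.ofReal (f θ q.1) * ENNReal.ofReal (pu d δ q.2)) q
      = ENNReal.ofReal (f θ q.1) * (ENNReal.ofReal (pu d δ q.2) * C.indicator 1 (q.1 + q.2)) := by
    intro q
    by_cases h : q.1 + q.2 ∈ C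
    · rw [Set.indicator_of_mem h, Pi.one_apply, mul_one,
        Set.indicator_of_mem (show q ∈ {q : EuclideanSpace ℝ (Fin d) × EuclideanSpace ℝ (Fin d) |
          q.1 + q.2 ∈ C} from h)]
    · rw [Set.indicator_of_notMem h, mul_zero, mul_zero,
        Set.indicator_of_notMem (show q ∉ {q : EuclideanSpace ℝ (Fin d) ×
          EuclideanSpace ℝ (Fin d) | q.1 + q.2 ∈ C} from h)]
  simp_rw [hind]
  rw [Measure.volume_eq_prod, lintegral_prod]
  · have hshift : ∀ x, (∫⁻ e, ENNReal.ofReal (pu d δ e) * C.indicator 1 (x + e))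
        = v⁻¹ * ∫⁻ dd, (Metric.closedBall (0 : EuclideanSpace ℝ (Fin d)) δ).indicator 1 (dd - x)
          * C.indicator 1 dd := by
      intro x
      simp_rw [ofReal_pu hδ, ← hv, mul_assoc]
      rw [lintegral_const_mul]
      · congr 1
        have h := lintegral_add_right_eq_self (μ := volume)
          (fun dd => (Metric.closedBall (0 : EuclideanSpace ℝ (Fin d)) δ).indicator 1 (dd - x)
            * C.indicator 1 dd) x
        rw [← h]
        refine lintegral_congr fun e => ?_
        rw [add_sub_cancel_right, add_comm]
      · exact ((measurable_const.indicator measurableSet_closedBall).mul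
          ((measurable_const.indicator hC).comp (measurable_const.add measurable_id)))
    have hpull : ∀ x : EuclideanSpace ℝ (Fin d),
        (∫⁻ e, ENNReal.ofReal (f θ x) * (ENNReal.ofReal (pu d δ e) * C.indicator 1 (x + e)))
        = ENNReal.ofReal (f θ x) * (v⁻¹ * ∫⁻ dd,
            (Metric.closedBall (0 : EuclideanSpace ℝ (Fin d)) δ).indicator 1 (dd - x)
            * C.indicator 1 dd) := by
      intro x
      rw [lintegral_const_mul' _ _ ENNReal.ofReal_ne_top, hshift x]
    simp_rw [hpull]
    have hcomm : ∀ x : EuclideanSpace ℝ (Fin d),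
        ENNReal.ofReal (f θ x) * (v⁻¹ * ∫⁻ dd,
            (Metric.closedBall (0 : EuclideanSpace ℝ (Fin d)) δ).indicator 1 (dd - x)
            * C.indicator 1 dd)
        = v⁻¹ * ∫⁻ dd, (Metric.closedBall (0 : EuclideanSpace ℝ (Fin d)) δ).indicator 1 (dd - x)
            * C.indicator 1 dd * ENNReal.ofReal (f θ x) := by
      intro x
      rw [lintegral_mul_const' _ _ ENNReal.ofReal_ne_top]
      ring
    simp_rw [hcomm]
    rw [lintegral_const_mul]
    swap
    · exact Measurable.lintegral_prod_right'
        (f := fun q : EuclideanSpace ℝ (Fin d) × EuclideanSpace ℝ (Fin d) =>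
          (Metric.closedBall (0 : EuclideanSpace ℝ (Fin d)) δ).indicator 1 (q.2 - q.1)
            * C.indicator 1 q.2 * ENNReal.ofReal (f θ q.1))
        ((((measurable_const.indicator measurableSet_closedBall).comp
            (measurable_snd.sub measurable_fst)).mul
          ((measurable_const.indicator hC).comp measurable_snd)).mul
          ((hfθ.comp measurable_fst).ennreal_ofReal))
    congr 1
    rw [lintegral_lintegral_swap]
    swap
    · apply Measurable.aemeasurable
      exact (((measurable_const.indicator measurableSet_closedBall).comp
          (measurable_snd.sub measurable_fst)).mul
        ((measurable_const.indicator hC).comp measurable_snd)).mul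
        ((hfθ.comp measurable_fst).ennreal_ofReal)
    rw [← lintegral_indicator hC]
    refine lintegral_congr fun dd => ?_
    have hGd : G f δ θ dd = ∫⁻ x, (Metric.closedBall (0 : EuclideanSpace ℝ (Fin d)) δ).indicator 1
        (dd - x) * ENNReal.ofReal (f θ x) := by unfold G; rfl
    by_cases h : dd ∈ C
    · rw [Set.indicator_of_mem h, Set.indicator_of_mem h, hGd]
      simp
    · rw [Set.indicator_of_notMem h]
      have h0 : C.indicator (1 : EuclideanSpace ℝ (Fin d) → ℝ≥0∞) dd = 0 :=
        Set.indicator_of_notMem h _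
      simp [h0]
      rw [Set.indicator_of_notMem h]
  · apply Measurable.aemeasurable
    exact ((hfθ.comp measurable_fst).ennreal_ofReal).mul
      (((measurable_pu d δ).comp measurable_snd).ennreal_ofReal.mul
        ((measurable_const.indicator hC).comp (measurable_fst.add measurable_snd)))


lemma conj2 {π : (Fin p → ℝ) → ℝ} {f : (Fin p → ℝ) → EuclideanSpace ℝ (Fin d) → ℝ}
    {δ : ℝ} (hδ : 0 < δ)
    (hπ_meas : Measurable π) (hπ_nonneg : ∀ θ, 0 ≤ π θ) (hπ_int : ∫ θ, π θ = 1)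
    (hf_meas : Measurable (Function.uncurry f)) (hf_nonneg : ∀ θ x, 0 ≤ f θ x)
    (hf_int : ∀ θ, ∫ x, f θ x = 1)
    (B : Set (Fin p → ℝ)) (C : Set (EuclideanSpace ℝ (Fin d)))
    (hB : MeasurableSet B) (hC : MeasurableSet C) :
    Measure.map
        (fun ω : (Fin p → ℝ) × EuclideanSpace ℝ (Fin d) × EuclideanSpace ℝ (Fin d) =>
          (ω.1, ω.2.1 + ω.2.2))
        ((volume : Measure
            ((Fin p → ℝ) × EuclideanSpace ℝ (Fin d) × EuclideanSpace ℝ (Fin d))).withDensity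
          (fun ω => ENNReal.ofReal (π ω.1 * f ω.1 ω.2.1 * pu d δ ω.2.2)))
        (B ×ˢ C)
      = ENNReal.ofReal (∫ dd in C,
          (∫ θ', π θ' * ∫ x, pu d δ (dd - x) * f θ' x) *
            ∫ θ in B, π θ * (∫ x, pu d δ (dd - x) * f θ x) /
              (∫ θ', π θ' * ∫ x, pu d δ (dd - x) * f θ' x)) := by
  have hT : Measurable (fun ω : (Fin p → ℝ) × EuclideanSpace ℝ (Fin d) × EuclideanSpace ℝ (Fin d) =>
      (ω.1, ω.2.1 + ω.2.2)) :=
    measurable_fst.prodMk ((measurable_fst.comp measurable_snd).add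
      (measurable_snd.comp measurable_snd))
  have hW : MeasurableSet {q : EuclideanSpace ℝ (Fin d) × EuclideanSpace ℝ (Fin d) |
      q.1 + q.2 ∈ C} := (measurable_fst.add measurable_snd) hC
  have hpre : (fun ω : (Fin p → ℝ) × EuclideanSpace ℝ (Fin d) × EuclideanSpace ℝ (Fin d) =>
      (ω.1, ω.2.1 + ω.2.2)) ⁻¹' (B ×ˢ C)
      = B ×ˢ {q : EuclideanSpace ℝ (Fin d) × EuclideanSpace ℝ (Fin d) | q.1 + q.2 ∈ C} := by
    ext ω
    simp [Set.mem_prod]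
  rw [Measure.map_apply hT (hB.prod hC), hpre, withDensity_apply _ (hB.prod hW),
    Measure.volume_eq_prod, ← Measure.prod_restrict, lintegral_prod]
  swap
  · exact ((((hπ_meas.comp measurable_fst).mul (hf_meas.comp (measurable_fst.prodMk
      (measurable_fst.comp measurable_snd)))).mul ((measurable_pu d δ).comp
      (measurable_snd.comp measurable_snd))).ennreal_ofReal).aemeasurable
  have hsplit : ∀ (θ : Fin p → ℝ) (q : EuclideanSpace ℝ (Fin d) × EuclideanSpace ℝ (Fin d)),
      ENNReal.ofReal (π θ * f θ q.1 * pu d δ q.2)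
      = ENNReal.ofReal (π θ) * (ENNReal.ofReal (f θ q.1) * ENNReal.ofReal (pu d δ q.2)) := by
    intro θ q
    rw [ENNReal.ofReal_mul (mul_nonneg (hπ_nonneg θ) (hf_nonneg θ _)),
      ENNReal.ofReal_mul (hπ_nonneg θ), mul_assoc]
  simp_rw [hsplit]
  have hinner : ∀ θ : Fin p → ℝ,
      (∫⁻ q in {q : EuclideanSpace ℝ (Fin d) × EuclideanSpace ℝ (Fin d) | q.1 + q.2 ∈ C},
        ENNReal.ofReal (π θ) * (ENNReal.ofReal (f θ q.1) * ENNReal.ofReal (pu d δ q.2)))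
      = ∫⁻ dd in C, ENNReal.ofReal (π θ)
          * ((volume (Metric.closedBall (0 : EuclideanSpace ℝ (Fin d)) δ))⁻¹ * G f δ θ dd) := by
    intro θ
    rw [lintegral_const_mul' _ _ ENNReal.ofReal_ne_top, inner_W hδ hf_meas θ hC,
      lintegral_const_mul _ ((measurable_G_right hf_meas θ).const_mul _),
      lintegral_const_mul _ (measurable_G_right hf_meas θ)]
  simp_rw [hinner]
  rw [lintegral_lintegral_swap]
  swap
  · exact (((hπ_meas.comp measurable_fst).ennreal_ofReal).mul
      (measurable_const.mul (measurable_G hf_meas))).aemeasurable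
  have hfin : (∫⁻ dd in C, Phi π f δ B dd) ≠ ⊤ := by
    refine ne_top_of_le_ne_top ENNReal.one_ne_top ?_
    refine le_trans (lintegral_mono' Measure.restrict_le_self le_rfl) ?_
    exact lintegral_Phi_le_one hδ hπ_meas hπ_nonneg hπ_int hf_meas hf_nonneg hf_int B
  rw [integral_congr_ae (g := fun dd => (Phi π f δ B dd).toReal)
    (Filter.Eventually.of_forall fun dd =>
      key_integrand hδ hπ_meas hπ_nonneg hπ_int hf_meas hf_nonneg hf_int B dd),
    integral_toReal ((measurable_Phi hπ_meas hf_meas B).aemeasurable)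
      (Filter.Eventually.of_forall fun dd =>
        lt_of_le_of_lt (Phi_le hδ hπ_nonneg hπ_int hf_nonneg hf_int B dd)
          (lt_top_iff_ne_top.2 (ENNReal.inv_ne_top.2 (vol_ne_zero hδ)))),
    ENNReal.ofReal_toReal hfin]
  rfl

end AlgAAux


end Aux

/-- **interpretation of Algorithm A.** Accepting θ iff ‖X − D‖ ≤ δ (Euclidean
metric) yields, conditionally on acceptance, exactly the posterior of the additive-error model
D' = X + ε with ε uniform on the closed Euclidean δ-ball: writing π_u for the uniform density
on that ball, the first conjunct says the accepted-θ distribution has density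
θ ↦ π(θ) ∫ π_u(D − x) f(x|θ) dx / Z(D), and the second disintegrates the law of (θ̂, D') over
D', exhibiting θ ↦ π(θ) ∫ π_u(d − x) f(x|θ) dx / Z(d) as the conditional density of θ̂ given
D' = d; at d = D these densities coincide. -/
theorem algorithmA_is_uniform_error_posterior (p d : ℕ)
    (π : (Fin p → ℝ) → ℝ) (f : (Fin p → ℝ) → EuclideanSpace ℝ (Fin d) → ℝ)
    (D : EuclideanSpace ℝ (Fin d)) (δ : ℝ)
    (hπ_meas : Measurable π) (hπ_nonneg : ∀ θ, 0 ≤ π θ) (hπ_int : ∫ θ, π θ = 1)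
    (hf_meas : Measurable (Function.uncurry f)) (hf_nonneg : ∀ θ x, 0 ≤ f θ x)
    (hf_int : ∀ θ, ∫ x, f θ x = 1)
    (hδ : 0 < δ)
    (hacc_pos : 0 < ((volume : Measure ((Fin p → ℝ) × EuclideanSpace ℝ (Fin d))).withDensity
        (fun q => ENNReal.ofReal (π q.1 * f q.1 q.2)))
        {q : (Fin p → ℝ) × EuclideanSpace ℝ (Fin d) | ‖q.2 - D‖ ≤ δ}) :
    let πu : EuclideanSpace ℝ (Fin d) → ℝ := fun e =>
      Set.indicator (Metric.closedBall (0 : EuclideanSpace ℝ (Fin d)) δ)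
        (fun _ => ((volume (Metric.closedBall (0 : EuclideanSpace ℝ (Fin d)) δ)).toReal)⁻¹) e
    (Measure.map Prod.fst
      (ProbabilityTheory.cond
        ((volume : Measure ((Fin p → ℝ) × EuclideanSpace ℝ (Fin d))).withDensity
          (fun q => ENNReal.ofReal (π q.1 * f q.1 q.2)))
        {q : (Fin p → ℝ) × EuclideanSpace ℝ (Fin d) | ‖q.2 - D‖ ≤ δ})
    = (volume : Measure (Fin p → ℝ)).withDensity
        (fun θ => ENNReal.ofReal (π θ * (∫ x, πu (D - x) * f θ x) /
          (∫ θ', π θ' * ∫ x, πu (D - x) * f θ' x))))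
    ∧
    (∀ B : Set (Fin p → ℝ), ∀ C : Set (EuclideanSpace ℝ (Fin d)),
      MeasurableSet B → MeasurableSet C →
      Measure.map
        (fun ω : (Fin p → ℝ) × EuclideanSpace ℝ (Fin d) × EuclideanSpace ℝ (Fin d) =>
          (ω.1, ω.2.1 + ω.2.2))
        ((volume : Measure
            ((Fin p → ℝ) × EuclideanSpace ℝ (Fin d) × EuclideanSpace ℝ (Fin d))).withDensity
          (fun ω => ENNReal.ofReal (π ω.1 * f ω.1 ω.2.1 * πu ω.2.2)))
        (B ×ˢ C)
      = ENNReal.ofReal (∫ dd in C,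
          (∫ θ', π θ' * ∫ x, πu (dd - x) * f θ' x) *
            ∫ θ in B, π θ * (∫ x, πu (dd - x) * f θ x) /
              (∫ θ', π θ' * ∫ x, πu (dd - x) * f θ' x))) := by
  intro πu
  have hpu : πu = AlgAAux.pu d δ := rfl
  rw [hpu]
  exact ⟨AlgAAux.conj1 hδ hπ_meas hπ_nonneg hπ_int hf_meas hf_nonneg hf_int hacc_pos,
    fun B C hB hC =>
      AlgAAux.conj2 hδ hπ_meas hπ_nonneg hπ_int hf_meas hf_nonneg hf_int B C hB hC⟩
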